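/- If a connected graph G admits a local multiset resolving set, then every clique K of G contains at most two K-end vertices. -/
import Mathlib


open SimpleGraph Finset

/-- The representation multiset of `u` with respect to `W`: the multiset of distances
from `u` to the vertices of `W`. -/
noncomputable def mrep {V : Type*} (G : SimpleGraph V) (u : V) (W : Finset V) : Multiset ℕ :=
  W.val.map fun w => G.dist u w

/-- `W` is a local multiset resolving set: adjacent vertices have distinct
representation multisets. -/
def IsLocalMultisetResolving {V : Type*} (G : SimpleGraph V) (W : Finset V) : Prop :=
  ∀ u v : V, G.Adj u v → mrep G u W ≠ mrep G v W

lemma twin_dist_le {V : Type*} (G : SimpleGraph V) (hconn : G.Connected) {u v : V}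
    (huv : G.Adj u v) (h : ∀ x, x ≠ u → x ≠ v → (G.Adj u x ↔ G.Adj v x)) :
    ∀ y, y ≠ u → y ≠ v → G.dist v y ≤ G.dist u y := by
  intro y hyu hyv
  obtain ⟨p, hp⟩ := hconn.exists_walk_length_eq_dist u y
  cases p with
  | nil => exact absurd rfl hyu
  | cons hadj q =>
    rename_i x
    by_cases hxv : x = v
    · calc G.dist v y ≤ q.length := hxv ▸ G.dist_le q
        _ ≤ q.length + 1 := Nat.le_succ _
        _ = G.dist u y := hp
    · have hxu : x ≠ u := fun hx => G.irrefl (hx ▸ hadj)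
      have : G.Adj v x := (h x hxu hxv).mp hadj
      calc G.dist v y ≤ (SimpleGraph.Walk.cons this q).length := G.dist_le _
        _ = G.dist u y := hp

lemma twin_dist {V : Type*} (G : SimpleGraph V) (hconn : G.Connected) {u v : V}
    (huv : G.Adj u v) (h : ∀ x, x ≠ u → x ≠ v → (G.Adj u x ↔ G.Adj v x)) :
    ∀ y, y ≠ u → y ≠ v → G.dist u y = G.dist v y := by
  intro y hyu hyv
  refine le_antisymm ?_ (twin_dist_le G hconn huv h y hyu hyv)
  exact twin_dist_le G hconn huv.symm
    (fun x hxv hxu => (h x hxu hxv).symm) y hyv hyu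

lemma mrep_eq_of_twin {V : Type*} [DecidableEq V] (G : SimpleGraph V) (hconn : G.Connected)
    {u v : V} (huv : G.Adj u v)
    (h : ∀ x, x ≠ u → x ≠ v → (G.Adj u x ↔ G.Adj v x)) (W : Finset V)
    (hW : (u ∈ W ∧ v ∈ W) ∨ (u ∉ W ∧ v ∉ W)) :
    mrep G u W = mrep G v W := by
  have hne : u ≠ v := G.ne_of_adj huv
  rcases hW with ⟨hu, hv⟩ | ⟨hu, hv⟩
  · -- both in W
    have hnd : W.val.Nodup := W.nodup
    have h1 : W.val = u ::ₘ W.val.erase u := (Multiset.cons_erase hu).symm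
    have hv' : v ∈ W.val.erase u := Multiset.mem_erase_of_ne (Ne.symm hne) |>.mpr hv
    have h2 : W.val.erase u = v ::ₘ (W.val.erase u).erase v := (Multiset.cons_erase hv').symm
    have hmem : ∀ x ∈ (W.val.erase u).erase v, x ≠ u ∧ x ≠ v := by
      intro x hx
      have hnd' : (W.val.erase u).Nodup := hnd.erase u
      have hx1 : x ∈ W.val.erase u := Multiset.mem_of_mem_erase hx
      have hxv : x ≠ v := (hnd'.mem_erase_iff.mp hx).1
      have hxu : x ≠ u := (hnd.mem_erase_iff.mp hx1).1
      exact ⟨hxu, hxv⟩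
    unfold mrep
    rw [h1, h2]
    simp only [Multiset.map_cons]
    rw [G.dist_self, (G.dist_self : G.dist v v = 0),
      (SimpleGraph.dist_eq_one_iff_adj.mpr huv : G.dist u v = 1),
      (SimpleGraph.dist_eq_one_iff_adj.mpr huv.symm : G.dist v u = 1)]
    rw [Multiset.cons_swap]
    congr 2
    apply Multiset.map_congr rfl
    intro x hx
    exact twin_dist G hconn huv h x (hmem x hx).1 (hmem x hx).2
  · unfold mrep
    apply Multiset.map_congr rfl
    intro x hx
    have hxu : x ≠ u := fun e => hu (e ▸ hx)
    have hxv : x ≠ v := fun e => hv (e ▸ hx)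
    exact twin_dist G hconn huv h x hxu hxv

/-- If a connected graph `G` admits a local multiset resolving set, then every clique `K`
of `G` (of order at least 3) contains at most two `K`-end vertices, where a `K`-end
vertex is a vertex of `K` whose degree in `G` equals `|K| - 1`. -/
theorem stmt_5 {V : Type*} [Fintype V] [DecidableEq V] (G : SimpleGraph V)
    [DecidableRel G.Adj] (hconn : G.Connected)
    (hres : ∃ W : Finset V, IsLocalMultisetResolving G W)
    (K : Finset V) (hK : G.IsClique ↑K) (hK3 : 3 ≤ K.card) :
    (K.filter fun u => G.degree u = K.card - 1).card ≤ 2 := by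
  obtain ⟨W, hW⟩ := hres
  by_contra hcard
  push_neg at hcard
  obtain ⟨a, b, c, ha, hb, hc, hab, hac, hbc⟩ := Finset.two_lt_card_iff.mp hcard
  -- characterize adjacency of end vertices
  have key : ∀ x, x ∈ K.filter (fun u => G.degree u = K.card - 1) →
      ∀ y, G.Adj x y ↔ (y ∈ K ∧ y ≠ x) := by
    intro x hx y
    rw [Finset.mem_filter] at hx
    obtain ⟨hxK, hxdeg⟩ := hx
    have hsub : K.erase x ⊆ G.neighborFinset x := by
      intro z hz
      rw [Finset.mem_erase] at hz
      rw [SimpleGraph.mem_neighborFinset]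
      exact hK hxK hz.2 (Ne.symm hz.1)
    have heq : K.erase x = G.neighborFinset x := by
      apply Finset.eq_of_subset_of_card_le hsub
      rw [SimpleGraph.card_neighborFinset_eq_degree, hxdeg, Finset.card_erase_of_mem hxK]
    rw [← SimpleGraph.mem_neighborFinset, ← heq, Finset.mem_erase]
    tauto
  have hend : ∀ x y, x ∈ K.filter (fun u => G.degree u = K.card - 1) →
      y ∈ K.filter (fun u => G.degree u = K.card - 1) → x ≠ y →
      G.Adj x y ∧ ∀ z, z ≠ x → z ≠ y → (G.Adj x z ↔ G.Adj y z) := by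
    intro x y hx hy hxy
    constructor
    · exact (key x hx y).mpr ⟨(Finset.mem_filter.mp hy).1, Ne.symm hxy⟩
    · intro z hzx hzy
      rw [key x hx z, key y hy z]
      tauto
  have contra : ∀ x y, x ∈ K.filter (fun u => G.degree u = K.card - 1) →
      y ∈ K.filter (fun u => G.degree u = K.card - 1) → x ≠ y →
      ((x ∈ W ∧ y ∈ W) ∨ (x ∉ W ∧ y ∉ W)) → False := by
    intro x y hx hy hxy hmem
    obtain ⟨hadj, htwin⟩ := hend x y hx hy hxy
    exact hW x y hadj (mrep_eq_of_twin G hconn hadj htwin W hmem)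
  by_cases hua : a ∈ W <;> by_cases hub : b ∈ W <;> by_cases huc : c ∈ W
  · exact contra a b ha hb hab (Or.inl ⟨hua, hub⟩)
  · exact contra a b ha hb hab (Or.inl ⟨hua, hub⟩)
  · exact contra a c ha hc hac (Or.inl ⟨hua, huc⟩)
  · exact contra b c hb hc hbc (Or.inr ⟨hub, huc⟩)
  · exact contra b c hb hc hbc (Or.inl ⟨hub, huc⟩)
  · exact contra a c ha hc hac (Or.inr ⟨hua, huc⟩)
  · exact contra a b ha hb hab (Or.inr ⟨hua, hub⟩)
  · exact contra a b ha hb hab (Or.inr ⟨hua, hub⟩)
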